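/- Let B be a Banach space with a second norm |·| satisfying |φ| ≤ C‖φ‖, and let {P_v} be bounded operators satisfying uniformly ‖P_v^n φ‖ ≤ C θ^n ‖φ‖ + C M^n |φ| and |P_v^n φ| ≤ C M^n |φ| for all n, with 0 < θ < M. Fix r ∈ (θ, M) and z ∈ ℂ with r < |z| ≤ 4CM. If (z - P_v) g = h, then there are constants C', n₀ depending only on C, θ, r, M (not on v, z, g, h) such that ‖g‖ ≤ C' ‖h‖ + C' |g|. -/

import Mathlib

/-- A priori two-norm estimate in the generalized Keller–Liverani argument:
under uniform Lasota–Yorke inequalities and weak-norm boundedness, if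
`(z - P_v) g = h` with `r < |z| ≤ 4CM`, then `‖g‖ ≤ C'‖h‖ + C'|g|` with `C'`
independent of `v`, `z`, `g`, `h`. -/
theorem keller_liverani_apriori_estimate
    {B : Type*} [NormedAddCommGroup B] [NormedSpace ℂ B] {ι : Type*}
    (P : ι → (B →L[ℂ] B)) (wnorm : B → ℝ) (C θ M r : ℝ)
    (hC : 0 < C) (hθ : 0 < θ) (hθM : θ < M) (hr : θ < r ∧ r < M)
    (hw0 : ∀ φ : B, 0 ≤ wnorm φ) (hw : ∀ φ : B, wnorm φ ≤ C * ‖φ‖)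
    (hweak : ∀ v : ι, ∀ n : ℕ, ∀ φ : B, wnorm ((P v ^ n) φ) ≤ C * M ^ n * wnorm φ)
    (hLY : ∀ v : ι, ∀ n : ℕ, ∀ φ : B,
      ‖(P v ^ n) φ‖ ≤ C * θ ^ n * ‖φ‖ + C * M ^ n * wnorm φ) :
    ∃ C' > 0, ∀ v : ι, ∀ z : ℂ, r < ‖z‖ → ‖z‖ ≤ 4 * C * M → ∀ g h : B,
      (z • (1 : B →L[ℂ] B) - P v) g = h → ‖g‖ ≤ C' * ‖h‖ + C' * wnorm g := by
  obtain ⟨hθr, hrM⟩ := hr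
  have hr0 : 0 < r := hθ.trans hθr
  have hM0 : 0 < M := hθ.trans hθM
  obtain ⟨n, hn⟩ := exists_pow_lt_of_lt_one (show (0:ℝ) < 1/(2*C) by positivity)
    ((div_lt_one hr0).2 hθr)
  have hrn : (0:ℝ) < r ^ n := pow_pos hr0 n
  have hθn : C * θ ^ n < r ^ n / 2 := by
    rw [div_pow, div_lt_div_iff₀ (by positivity) (by positivity)] at hn
    nlinarith [pow_pos hθ n]
  set A : ℝ := max 1 (4*C*M) with hA
  have hA1 : (1:ℝ) ≤ A := le_max_left _ _
  set mM : ℝ := max 1 M with hmM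
  have hmM1 : (1:ℝ) ≤ mM := le_max_left _ _
  set K : ℝ := C*(1+C) * mM^n with hK
  have hK0 : 0 < K := by positivity
  set C' : ℝ := (2 / r^n) * (n * A^n * K + C * M^n) + 1 with hC'
  have hC'pos : 0 < C' := by positivity
  refine ⟨C', hC'pos, ?_⟩
  intro v z hzr hzM g h hgh
  have hz0 : (0:ℝ) ≤ ‖z‖ := norm_nonneg z
  -- key identity
  have comm : Commute (z • (1 : B →L[ℂ] B)) (P v) := (Commute.one_left (P v)).smul_left z
  have hgeom := comm.geom_sum₂_mul n
  have key : z^n • g - (P v ^ n) g = ∑ i ∈ Finset.range n, z^i • (P v ^ (n-1-i)) h := by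
    have h1 : ((z • (1 : B →L[ℂ] B))^n - (P v)^n) g
        = (∑ i ∈ Finset.range n, (z • (1 : B →L[ℂ] B))^i * (P v)^(n-1-i))
            ((z • (1 : B →L[ℂ] B) - P v) g) := by
      rw [← ContinuousLinearMap.comp_apply, ← ContinuousLinearMap.mul_def, hgeom]
    rw [hgh] at h1
    simpa [smul_pow, ContinuousLinearMap.sum_apply, ContinuousLinearMap.smul_apply,
      ContinuousLinearMap.sub_apply, ContinuousLinearMap.mul_apply] using h1
  -- bound each summand
  have hterm : ∀ i ∈ Finset.range n, ‖z^i • (P v ^ (n-1-i)) h‖ ≤ A^n * K * ‖h‖ := by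
    intro i hi
    rw [norm_smul, norm_pow]
    have hzA : ‖z‖^i ≤ A^n := by
      calc ‖z‖^i ≤ A^i := pow_le_pow_left₀ hz0 (hzM.trans (le_max_right _ _)) i
      _ ≤ A^n := pow_le_pow_right₀ hA1 (Finset.mem_range.1 hi).le
    have hPk : ‖(P v ^ (n-1-i)) h‖ ≤ K * ‖h‖ := by
      have h1 := hLY v (n-1-i) h
      have h2 := hw h
      have hθk : θ ^ (n-1-i) ≤ mM ^ n := by
        calc θ ^ (n-1-i) ≤ mM ^ (n-1-i) :=
          pow_le_pow_left₀ hθ.le ((hθM.le.trans (le_max_right _ _))) _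
        _ ≤ mM ^ n := pow_le_pow_right₀ hmM1 (by omega)
      have hMk : M ^ (n-1-i) ≤ mM ^ n := by
        calc M ^ (n-1-i) ≤ mM ^ (n-1-i) := pow_le_pow_left₀ hM0.le (le_max_right _ _) _
        _ ≤ mM ^ n := pow_le_pow_right₀ hmM1 (by omega)
      have hh0 : (0:ℝ) ≤ ‖h‖ := norm_nonneg h
      calc ‖(P v ^ (n-1-i)) h‖ ≤ C * θ ^ (n-1-i) * ‖h‖ + C * M ^ (n-1-i) * wnorm h := h1
        _ ≤ C * mM^n * ‖h‖ + C * mM^n * (C * ‖h‖) := by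
            have hwh := hw0 h
            gcongr
        _ = K * ‖h‖ := by rw [hK]; ring
    calc ‖z‖^i * ‖(P v ^ (n-1-i)) h‖ ≤ A^n * (K * ‖h‖) := by
          apply mul_le_mul hzA hPk (norm_nonneg _) (by positivity)
      _ = A^n * K * ‖h‖ := by ring
  -- main inequality
  have hsum : ‖∑ i ∈ Finset.range n, z^i • (P v ^ (n-1-i)) h‖ ≤ n * (A^n * K * ‖h‖) := by
    calc ‖∑ i ∈ Finset.range n, z^i • (P v ^ (n-1-i)) h‖
        ≤ ∑ i ∈ Finset.range n, ‖z^i • (P v ^ (n-1-i)) h‖ := norm_sum_le _ _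
      _ ≤ ∑ _i ∈ Finset.range n, A^n * K * ‖h‖ := Finset.sum_le_sum hterm
      _ = n * (A^n * K * ‖h‖) := by
          rw [Finset.sum_const, Finset.card_range, nsmul_eq_mul]
  have hmain : r^n * ‖g‖ ≤ n * (A^n * K * ‖h‖) + (C * θ^n * ‖g‖ + C * M^n * wnorm g) := by
    have h1 : ‖z^n • g‖ ≤ n * (A^n * K * ‖h‖) + ‖(P v ^ n) g‖ := by
      calc ‖z^n • g‖ = ‖(z^n • g - (P v ^ n) g) + (P v ^ n) g‖ := by
              rw [sub_add_cancel]
        _ ≤ ‖z^n • g - (P v ^ n) g‖ + ‖(P v ^ n) g‖ := norm_add_le _ _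
        _ ≤ n * (A^n * K * ‖h‖) + ‖(P v ^ n) g‖ := by
              rw [key]; exact add_le_add_left hsum _
    have h2 : r^n * ‖g‖ ≤ ‖z^n • g‖ := by
      rw [norm_smul, norm_pow]
      exact mul_le_mul_of_nonneg_right (pow_le_pow_left₀ hr0.le hzr.le n) (norm_nonneg g)
    exact h2.trans (h1.trans (by gcongr; exact hLY v n g))
  -- conclude
  have hg0 : (0:ℝ) ≤ ‖g‖ := norm_nonneg g
  have hh0 : (0:ℝ) ≤ ‖h‖ := norm_nonneg h
  have hAK : (0:ℝ) ≤ (n:ℝ) * A^n * K := by positivity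
  have hCM : (0:ℝ) ≤ C * M^n := by positivity
  have h2r : (0:ℝ) < 2 / r^n := by positivity
  have hwg := hw0 g
  have step1 : C * θ^n * ‖g‖ ≤ r^n/2 * ‖g‖ := mul_le_mul_of_nonneg_right hθn.le hg0
  have step2 : ‖g‖ * r^n ≤ 2 * (n * A^n * K * ‖h‖ + C * M^n * wnorm g) := by linarith
  have h3 : ‖g‖ ≤ (2 * (n * A^n * K * ‖h‖ + C * M^n * wnorm g)) / r^n := by
    rw [le_div_iff₀ hrn]; linarith
  have hc1 : (2/r^n) * (n * A^n * K) ≤ C' := by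
    rw [hC']
    linarith [mul_nonneg h2r.le hCM]
  have hc2 : (2/r^n) * (C * M^n) ≤ C' := by
    rw [hC']
    linarith [mul_nonneg h2r.le hAK]
  calc ‖g‖ ≤ (2 * (n * A^n * K * ‖h‖ + C * M^n * wnorm g)) / r^n := h3
    _ = (2/r^n) * (n * A^n * K) * ‖h‖ + (2/r^n) * (C * M^n) * wnorm g := by
        field_simp
    _ ≤ C' * ‖h‖ + C' * wnorm g :=
        add_le_add (mul_le_mul_of_nonneg_right hc1 hh0)
          (mul_le_mul_of_nonneg_right hc2 hwg)
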